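/- Let F : B_{++} → V_{++} be continuously differentiable with components F_{w_{i,j}} (i ∈ [K], j ∈ [n₁]) and F_{u_{ab}} (a ∈ [n₁], b ∈ [d]), and let A ∈ ℝ^{(K+1)×(K+1)}_+ satisfy, for all i,k ∈ [K], a,j ∈ [n₁], b ∈ [d] and all (w,u) ∈ B_{++}: ⟨|∇_{w_k} F_{w_{i,j}}(w,u)|, w_k⟩ ≤ A_{i,k} F_{w_{i,j}}(w,u), ⟨|∇_u F_{w_{i,j}}(w,u)|, u⟩ ≤ A_{i,K+1} F_{w_{i,j}}(w,u), ⟨|∇_{w_k} F_{u_{ab}}(w,u)|, w_k⟩ ≤ A_{K+1,k} F_{u_{ab}}(w,u), and ⟨|∇_u F_{u_{ab}}(w,u)|, u⟩ ≤ A_{K+1,K+1} F_{u_{ab}}(w,u). Then for any weights γ_1,…,γ_{K+1} > 0 and all (w,u), (w̃,ũ) ∈ B_{++} it holds μ(F(w,u), F(w̃,ũ)) ≤ U · μ((w,u),(w̃,ũ)) with U = max_{k∈[K+1]} (Aᵀγ)_k / γ_k. -/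

import Mathlib

noncomputable section

open Real Filter Topology

/-- Parameter space of a one-hidden-layer network: pairs `(w, u)`. -/
abbrev PV (K n1 d : ℕ) : Type :=
  (Fin K → Fin n1 → ℝ) × (Fin n1 → Fin d → ℝ)

/-- Entrywise `p`-norm of a vector. -/
def pnorm {ι : Type} [Fintype ι] (p : ℝ) (x : ι → ℝ) : ℝ :=
  (∑ i, |x i| ^ p) ^ (1 / p)

/-- Entrywise `p`-norm of a matrix. -/
def pnormM {ι κ : Type} [Fintype ι] [Fintype κ] (p : ℝ) (x : ι → κ → ℝ) : ℝ :=
  (∑ i, ∑ j, |x i j| ^ p) ^ (1 / p)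

/-- Hölder conjugate `p' = p/(p-1)`. -/
def hconj (p : ℝ) : ℝ := p / (p - 1)

/-- `ψ_p(x) = sign(x) |x|^{p-1}`. -/
def psi (p x : ℝ) : ℝ := Real.sign x * |x| ^ (p - 1)

/-- The constraint set `S₊`. -/
def Splus (K n1 d : ℕ) (pw pu ρw ρu : ℝ) : Set (PV K n1 d) :=
  {z | (∀ i j, 0 ≤ z.1 i j) ∧ (∀ a b, 0 ≤ z.2 a b) ∧
    (∀ i, pnorm pw (z.1 i) = ρw) ∧ pnormM pu z.2 = ρu}

/-- The constraint set `S₊₊` (strictly positive entries). -/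
def Spp (K n1 d : ℕ) (pw pu ρw ρu : ℝ) : Set (PV K n1 d) :=
  {z | (∀ i j, 0 < z.1 i j) ∧ (∀ a b, 0 < z.2 a b) ∧
    (∀ i, pnorm pw (z.1 i) = ρw) ∧ pnormM pu z.2 = ρu}

/-- The set `B₊₊` (strictly positive entries, norms at most `ρ`). -/
def Bpp (K n1 d : ℕ) (pw pu ρw ρu : ℝ) : Set (PV K n1 d) :=
  {z | (∀ i j, 0 < z.1 i j) ∧ (∀ a b, 0 < z.2 a b) ∧
    (∀ i, pnorm pw (z.1 i) ≤ ρw) ∧ pnormM pu z.2 ≤ ρu}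

/-- Coordinate direction for the entry `w_{a,b}`. -/
def eW {K n1 d : ℕ} (a : Fin K) (b : Fin n1) : PV K n1 d :=
  ((fun i j => if i = a ∧ j = b then 1 else 0), 0)

/-- Coordinate direction for the entry `u_{a,b}`. -/
def eU {K n1 d : ℕ} (a : Fin n1) (b : Fin d) : PV K n1 d :=
  (0, fun i j => if i = a ∧ j = b then 1 else 0)

/-- Partial derivative `∂Φ/∂w_{a,b}`. -/
def gradW {K n1 d : ℕ} (Φ : PV K n1 d → ℝ) (z : PV K n1 d) (a : Fin K) (b : Fin n1) : ℝ :=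
  fderiv ℝ Φ z (eW a b)

/-- Partial derivative `∂Φ/∂u_{a,b}`. -/
def gradU {K n1 d : ℕ} (Φ : PV K n1 d → ℝ) (z : PV K n1 d) (a : Fin n1) (b : Fin d) : ℝ :=
  fderiv ℝ Φ z (eU a b)

/-- The power-iteration map `G^Φ`. -/
def GPhi {K n1 d : ℕ} (pw pu ρw ρu : ℝ) (Φ : PV K n1 d → ℝ) (z : PV K n1 d) : PV K n1 d :=
  ((fun i j => ρw * psi (hconj pw) (gradW Φ z i j) /
      pnorm pw (fun j' => psi (hconj pw) (gradW Φ z i j'))),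
    fun a b => ρu * psi (hconj pu) (gradU Φ z a b) /
      pnormM pu (fun a' b' => psi (hconj pu) (gradU Φ z a' b')))

/-- One-hidden-layer network `f_r(w,u)(x)`. -/
def net {K n1 d : ℕ} (α : Fin n1 → ℝ) (w : Fin K → Fin n1 → ℝ) (u : Fin n1 → Fin d → ℝ)
    (x : Fin d → ℝ) (r : Fin K) : ℝ :=
  ∑ l, w r l * (∑ m, u l m * x m) ^ α l

/-- Cross-entropy loss. -/
def loss {K : ℕ} (y : Fin K) (g : Fin K → ℝ) : ℝ :=
  -g y + Real.log (∑ j, Real.exp (g j))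

/-- The objective `Φ`. -/
def Phi {K n1 d n : ℕ} (α : Fin n1 → ℝ) (x : Fin n → Fin d → ℝ) (y : Fin n → Fin K)
    (ε : ℝ) (z : PV K n1 d) : ℝ :=
  (1 / (n : ℝ)) * ∑ i, (-loss (y i) (net α z.1 z.2 (x i)) + ∑ r, net α z.1 z.2 (x i) r)
    + ε * ((∑ r, ∑ l, z.1 r l) + ∑ l, ∑ m, z.2 l m)

/-- Spectral radius of a real square matrix: maximum modulus of its (complex) eigenvalues. -/
def specRad {m : ℕ} (A : Matrix (Fin m) (Fin m) ℝ) : ℝ :=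
  sSup {r : ℝ | ∃ μ : ℂ, μ ∈ spectrum ℂ (A.map Complex.ofReal) ∧ r = ‖μ‖}

/-- Maximum of `g` over `Fin n`, `n > 0`. -/
def finMax {n : ℕ} (hn : 0 < n) (g : Fin n → ℝ) : ℝ :=
  Finset.univ.sup' (Finset.univ_nonempty_iff.mpr (Fin.pos_iff_nonempty.mp hn)) g

/-- Weighted Thompson metric `μ` with weights `γ`. -/
def thomW {K n1 d : ℕ} (γ : Fin (K + 1) → ℝ) (z z' : PV K n1 d) : ℝ :=
  (∑ i : Fin K, γ i.castSucc *
      ‖(fun j : Fin n1 => Real.log (z.1 i j) - Real.log (z'.1 i j))‖)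
    + γ (Fin.last K) *
      ‖(fun (a : Fin n1) (b : Fin d) => Real.log (z.2 a b) - Real.log (z'.2 a b))‖

/-- The function `Ψ^α_{p,q}` from the paper. -/
def PsiF {r : ℕ} (α : Fin r → ℝ) (p q : ℝ) (δ : Fin r → ℝ) (t : ℝ) : ℝ :=
  let J : Finset (Fin r) := Finset.univ.filter fun l => α l * p ≤ q
  let Jc : Finset (Fin r) := Finset.univ.filter fun l => q < α l * p
  let ab : ℝ := if h : J.Nonempty then J.inf' h α else 0
  ((∑ l ∈ J, (δ l * t ^ α l) ^ (p * q / (q - ab * p))) ^ (1 - ab * p / q)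
    + if h : Jc.Nonempty then Jc.sup' h fun j => (δ j * t ^ α j) ^ p else 0) ^ (1 / p)

end
lemma pv_decomp {K n1 d : ℕ} (v : PV K n1 d) :
    v = (∑ k : Fin K, ∑ s : Fin n1, v.1 k s • (eW k s : PV K n1 d)) +
        ∑ a : Fin n1, ∑ b : Fin d, v.2 a b • (eU a b : PV K n1 d) := by
  refine Prod.ext ?_ ?_ <;> funext i j <;>
    simp [eW, eU, Prod.fst_sum, Prod.snd_sum, Finset.sum_apply, mul_ite, ite_and,
      Finset.sum_ite_eq, Finset.sum_ite_eq']
lemma interp_pow_le {p : ℝ} (hp : 0 < p) {a b t : ℝ} (ha : 0 < a) (hb : 0 < b)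
    (ht0 : 0 ≤ t) (ht1 : t ≤ 1) :
    |Real.exp (Real.log a + t * (Real.log b - Real.log a))| ^ p
      ≤ (1 - t) * |a| ^ p + t * |b| ^ p := by
  rw [abs_of_pos (Real.exp_pos _), abs_of_pos ha, abs_of_pos hb]
  have hap : (0:ℝ) < a ^ p := Real.rpow_pos_of_pos ha p
  have hbp : (0:ℝ) < b ^ p := Real.rpow_pos_of_pos hb p
  have key : (Real.exp (Real.log a + t * (Real.log b - Real.log a))) ^ p
      = (a ^ p) ^ (1 - t) * (b ^ p) ^ t := by
    rw [Real.rpow_def_of_pos (Real.exp_pos _), Real.log_exp,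
      Real.rpow_def_of_pos hap, Real.rpow_def_of_pos hbp,
      Real.log_rpow ha, Real.log_rpow hb, ← Real.exp_add]
    ring_nf
  rw [key]
  exact Real.geom_mean_le_arith_mean2_weighted (by linarith) ht0 hap.le hbp.le (by ring)

lemma pnorm_le_iff {ι : Type} [Fintype ι] {p ρ : ℝ} (hp : 0 < p) (hρ : 0 ≤ ρ) (x : ι → ℝ) :
    pnorm p x ≤ ρ ↔ ∑ i, |x i| ^ p ≤ ρ ^ p := by
  have hs : (0:ℝ) ≤ ∑ i, |x i| ^ p :=
    Finset.sum_nonneg fun i _ => Real.rpow_nonneg (abs_nonneg _) p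
  rw [pnorm, one_div]
  constructor
  · intro h
    calc ∑ i, |x i| ^ p = ((∑ i, |x i| ^ p) ^ p⁻¹) ^ p := by
          rw [Real.rpow_inv_rpow hs hp.ne']
      _ ≤ ρ ^ p := Real.rpow_le_rpow (Real.rpow_nonneg hs _) h hp.le
  · intro h
    calc (∑ i, |x i| ^ p) ^ p⁻¹ ≤ (ρ ^ p) ^ p⁻¹ :=
          Real.rpow_le_rpow hs h (by positivity)
      _ = ρ := Real.rpow_rpow_inv hρ hp.ne'
lemma pnormM_eq_pnorm {ι κ : Type} [Fintype ι] [Fintype κ] (p : ℝ) (x : ι → κ → ℝ) :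
    pnormM p x = pnorm p (fun q : ι × κ => x q.1 q.2) := by
  rw [pnormM, pnorm, Fintype.sum_prod_type]

/-- Geometric interpolation path between `z` and `z'`. -/
noncomputable def cpath {K n1 d : ℕ} (z z' : PV K n1 d) (t : ℝ) : PV K n1 d :=
  ((fun k s => Real.exp (Real.log (z.1 k s) + t * (Real.log (z'.1 k s) - Real.log (z.1 k s)))),
   fun a b => Real.exp (Real.log (z.2 a b) + t * (Real.log (z'.2 a b) - Real.log (z.2 a b))))

/-- Velocity of the interpolation path. -/
noncomputable def cvel {K n1 d : ℕ} (z z' : PV K n1 d) (t : ℝ) : PV K n1 d :=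
  ((fun k s => (cpath z z' t).1 k s * (Real.log (z'.1 k s) - Real.log (z.1 k s))),
   fun a b => (cpath z z' t).2 a b * (Real.log (z'.2 a b) - Real.log (z.2 a b)))

lemma cpath_zero {K n1 d : ℕ} {z z' : PV K n1 d}
    (h1 : ∀ i j, 0 < z.1 i j) (h2 : ∀ a b, 0 < z.2 a b) : cpath z z' 0 = z := by
  simp only [cpath, zero_mul, add_zero]
  exact Prod.ext (funext fun i => funext fun j => Real.exp_log (h1 i j))
    (funext fun a => funext fun b => Real.exp_log (h2 a b))

lemma cpath_one {K n1 d : ℕ} {z z' : PV K n1 d}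
    (h1 : ∀ i j, 0 < z'.1 i j) (h2 : ∀ a b, 0 < z'.2 a b) : cpath z z' 1 = z' := by
  have e : ∀ x y : ℝ, x + 1 * (y - x) = y := fun x y => by ring
  simp only [cpath, e]
  exact Prod.ext (funext fun i => funext fun j => Real.exp_log (h1 i j))
    (funext fun a => funext fun b => Real.exp_log (h2 a b))

lemma cpath_hasDerivAt {K n1 d : ℕ} (z z' : PV K n1 d) (t : ℝ) :
    HasDerivAt (cpath z z') (cvel z z' t) t := by
  apply HasDerivAt.prodMk <;> rw [hasDerivAt_pi] <;> intro i <;> rw [hasDerivAt_pi] <;> intro j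
  · exact ((hasDerivAt_mul_const _).const_add _).exp
  · exact ((hasDerivAt_mul_const _).const_add _).exp

lemma cpath_mem {K n1 d : ℕ} {pw pu ρw ρu : ℝ} (hpw : 1 < pw) (hpu : 1 < pu)
    (hρw : 0 < ρw) (hρu : 0 < ρu) {z z' : PV K n1 d}
    (hz : z ∈ Bpp K n1 d pw pu ρw ρu) (hz' : z' ∈ Bpp K n1 d pw pu ρw ρu)
    {t : ℝ} (ht : t ∈ Set.Icc (0:ℝ) 1) :
    cpath z z' t ∈ Bpp K n1 d pw pu ρw ρu := by
  obtain ⟨hz1, hz2, hz3, hz4⟩ := hz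
  obtain ⟨hz1', hz2', hz3', hz4'⟩ := hz'
  obtain ⟨ht0, ht1⟩ := ht
  have hpw0 : (0:ℝ) < pw := by linarith
  have hpu0 : (0:ℝ) < pu := by linarith
  refine ⟨fun i j => Real.exp_pos _, fun a b => Real.exp_pos _, ?_, ?_⟩
  · intro i
    rw [pnorm_le_iff hpw0 hρw.le]
    have h1 : ∑ j, |z.1 i j| ^ pw ≤ ρw ^ pw := (pnorm_le_iff hpw0 hρw.le _).mp (hz3 i)
    have h2 : ∑ j, |z'.1 i j| ^ pw ≤ ρw ^ pw := (pnorm_le_iff hpw0 hρw.le _).mp (hz3' i)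
    calc ∑ j, |(cpath z z' t).1 i j| ^ pw
        ≤ ∑ j, ((1 - t) * |z.1 i j| ^ pw + t * |z'.1 i j| ^ pw) :=
          Finset.sum_le_sum fun j _ =>
            interp_pow_le hpw0 (hz1 i j) (hz1' i j) ht0 ht1
      _ = (1 - t) * ∑ j, |z.1 i j| ^ pw + t * ∑ j, |z'.1 i j| ^ pw := by
          rw [Finset.sum_add_distrib, Finset.mul_sum, Finset.mul_sum]
      _ ≤ (1 - t) * ρw ^ pw + t * ρw ^ pw :=
          add_le_add (mul_le_mul_of_nonneg_left h1 (by linarith))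
            (mul_le_mul_of_nonneg_left h2 ht0)
      _ = ρw ^ pw := by ring
  · rw [pnormM_eq_pnorm, pnorm_le_iff hpu0 hρu.le]
    have h1 : ∑ q : Fin n1 × Fin d, |z.2 q.1 q.2| ^ pu ≤ ρu ^ pu := by
      rw [← pnorm_le_iff hpu0 hρu.le, ← pnormM_eq_pnorm]; exact hz4
    have h2 : ∑ q : Fin n1 × Fin d, |z'.2 q.1 q.2| ^ pu ≤ ρu ^ pu := by
      rw [← pnorm_le_iff hpu0 hρu.le, ← pnormM_eq_pnorm]; exact hz4'
    calc ∑ q : Fin n1 × Fin d, |(cpath z z' t).2 q.1 q.2| ^ pu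
        ≤ ∑ q : Fin n1 × Fin d, ((1 - t) * |z.2 q.1 q.2| ^ pu + t * |z'.2 q.1 q.2| ^ pu) :=
          Finset.sum_le_sum fun q _ =>
            interp_pow_le hpu0 (hz2 q.1 q.2) (hz2' q.1 q.2) ht0 ht1
      _ = (1 - t) * ∑ q : Fin n1 × Fin d, |z.2 q.1 q.2| ^ pu
            + t * ∑ q : Fin n1 × Fin d, |z'.2 q.1 q.2| ^ pu := by
          rw [Finset.sum_add_distrib, Finset.mul_sum, Finset.mul_sum]
      _ ≤ (1 - t) * ρu ^ pu + t * ρu ^ pu :=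
          add_le_add (mul_le_mul_of_nonneg_left h1 (by linarith))
            (mul_le_mul_of_nonneg_left h2 ht0)
      _ = ρu ^ pu := by ring
lemma clm_comp1 {K n1 d : ℕ} (L : PV K n1 d →L[ℝ] PV K n1 d) (v : PV K n1 d)
    (i : Fin K) (j : Fin n1) :
    (L v).1 i j = (∑ k, ∑ s, v.1 k s * (L (eW k s)).1 i j)
      + ∑ a, ∑ b, v.2 a b * (L (eU a b)).1 i j := by
  conv_lhs => rw [pv_decomp v]
  simp [map_add, map_sum, map_smul, Prod.fst_sum, Finset.sum_apply, smul_eq_mul]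

lemma clm_comp2 {K n1 d : ℕ} (L : PV K n1 d →L[ℝ] PV K n1 d) (v : PV K n1 d)
    (a : Fin n1) (b : Fin d) :
    (L v).2 a b = (∑ k, ∑ s, v.1 k s * (L (eW k s)).2 a b)
      + ∑ a', ∑ b', v.2 a' b' * (L (eU a' b')).2 a b := by
  conv_lhs => rw [pv_decomp v]
  simp [map_add, map_sum, map_smul, Prod.snd_sum, Finset.sum_apply, smul_eq_mul]
/-- Lipschitz estimate for a map `F : B₊₊ → V₊₊` in the weighted Thompson
metric: the constant is `U = max_k (Aᵀγ)_k/γ_k`. -/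
theorem statement4 {K n1 d : ℕ}
    (pw pu : ℝ) (hpw : 1 < pw) (hpu : 1 < pu)
    (ρw ρu : ℝ) (hρw : 0 < ρw) (hρu : 0 < ρu)
    (F : PV K n1 d → PV K n1 d) (F' : PV K n1 d → PV K n1 d →L[ℝ] PV K n1 d)
    (hdF : ∀ z ∈ Bpp K n1 d pw pu ρw ρu,
      HasFDerivWithinAt F (F' z) (Bpp K n1 d pw pu ρw ρu) z)
    (hF'c : ContinuousOn F' (Bpp K n1 d pw pu ρw ρu))
    (hFpos : ∀ z ∈ Bpp K n1 d pw pu ρw ρu,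
      (∀ i j, 0 < (F z).1 i j) ∧ (∀ a b, 0 < (F z).2 a b))
    (A : Matrix (Fin (K + 1)) (Fin (K + 1)) ℝ) (hA : ∀ i j, 0 ≤ A i j)
    (hb1 : ∀ z ∈ Bpp K n1 d pw pu ρw ρu, ∀ (i k : Fin K) (j : Fin n1),
      ∑ s, z.1 k s * |(F' z (eW k s)).1 i j| ≤ A i.castSucc k.castSucc * (F z).1 i j)
    (hb2 : ∀ z ∈ Bpp K n1 d pw pu ρw ρu, ∀ (i : Fin K) (j : Fin n1),
      ∑ a, ∑ b, z.2 a b * |(F' z (eU a b)).1 i j| ≤ A i.castSucc (Fin.last K) * (F z).1 i j)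
    (hb3 : ∀ z ∈ Bpp K n1 d pw pu ρw ρu, ∀ (k : Fin K) (a : Fin n1) (b : Fin d),
      ∑ s, z.1 k s * |(F' z (eW k s)).2 a b| ≤ A (Fin.last K) k.castSucc * (F z).2 a b)
    (hb4 : ∀ z ∈ Bpp K n1 d pw pu ρw ρu, ∀ (a : Fin n1) (b : Fin d),
      ∑ s, ∑ t, z.2 s t * |(F' z (eU s t)).2 a b| ≤
        A (Fin.last K) (Fin.last K) * (F z).2 a b)
    (γ : Fin (K + 1) → ℝ) (hγ : ∀ k, 0 < γ k) :
    ∀ z ∈ Bpp K n1 d pw pu ρw ρu, ∀ z' ∈ Bpp K n1 d pw pu ρw ρu,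
      thomW γ (F z) (F z') ≤
        (Finset.univ.sup' (Finset.univ_nonempty_iff.mpr ⟨Fin.last K⟩)
          fun k => A.transpose.mulVec γ k / γ k) * thomW γ z z' := by

  intro z hz z' hz'
  set U := (Finset.univ.sup' (Finset.univ_nonempty_iff.mpr ⟨Fin.last K⟩)
    fun k => A.transpose.mulVec γ k / γ k) with hU
  set δ : Fin (K + 1) → ℝ := Fin.lastCases
      ‖(fun (a : Fin n1) (b : Fin d) => Real.log (z.2 a b) - Real.log (z'.2 a b))‖
      (fun i => ‖(fun j : Fin n1 => Real.log (z.1 i j) - Real.log (z'.1 i j))‖) with hδ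
  have hδc : ∀ i : Fin K, δ i.castSucc
      = ‖(fun j : Fin n1 => Real.log (z.1 i j) - Real.log (z'.1 i j))‖ := fun i =>
    Fin.lastCases_castSucc i
  have hδl : δ (Fin.last K)
      = ‖(fun (a : Fin n1) (b : Fin d) => Real.log (z.2 a b) - Real.log (z'.2 a b))‖ := by
    exact Fin.lastCases_last
  have hδnn : ∀ k, 0 ≤ δ k := by
    intro k
    induction k using Fin.lastCases with
    | last => rw [hδl]; exact norm_nonneg _
    | cast i => rw [hδc]; exact norm_nonneg _
  have hδW : ∀ (k : Fin K) (s : Fin n1),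
      |Real.log (z'.1 k s) - Real.log (z.1 k s)| ≤ δ k.castSucc := by
    intro k s
    have h := norm_le_pi_norm (fun j : Fin n1 => Real.log (z.1 k j) - Real.log (z'.1 k j)) s
    rw [Real.norm_eq_abs] at h
    rw [abs_sub_comm, hδc]
    exact h
  have hδU : ∀ (a : Fin n1) (b : Fin d),
      |Real.log (z'.2 a b) - Real.log (z.2 a b)| ≤ δ (Fin.last K) := by
    intro a b
    have h1 := norm_le_pi_norm
      (fun (a : Fin n1) (b : Fin d) => Real.log (z.2 a b) - Real.log (z'.2 a b)) a
    have h2 := norm_le_pi_norm (fun b : Fin d => Real.log (z.2 a b) - Real.log (z'.2 a b)) b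
    rw [Real.norm_eq_abs] at h2
    rw [abs_sub_comm, hδl]
    exact h2.trans h1
  set B : Fin (K + 1) → ℝ := fun i => ∑ k, A i k * δ k with hB
  have hBnn : ∀ i, 0 ≤ B i := fun i =>
    Finset.sum_nonneg fun k _ => mul_nonneg (hA i k) (hδnn k)
  have hmap : Set.MapsTo (cpath z z') (Set.Icc (0:ℝ) 1) (Bpp K n1 d pw pu ρw ρu) :=
    fun t ht => cpath_mem hpw hpu hρw hρu hz hz' ht
  -- velocity bounds
  have hvW : ∀ t ∈ Set.Icc (0:ℝ) 1, ∀ (k : Fin K) (s : Fin n1),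
      |(cvel z z' t).1 k s| ≤ δ k.castSucc * (cpath z z' t).1 k s := by
    intro t ht k s
    have hzpos : 0 < (cpath z z' t).1 k s := (hmap ht).1 k s
    show |(cpath z z' t).1 k s * (Real.log (z'.1 k s) - Real.log (z.1 k s))| ≤ _
    rw [abs_mul, abs_of_pos hzpos, mul_comm]
    exact mul_le_mul_of_nonneg_right (hδW k s) hzpos.le
  have hvU : ∀ t ∈ Set.Icc (0:ℝ) 1, ∀ (a : Fin n1) (b : Fin d),
      |(cvel z z' t).2 a b| ≤ δ (Fin.last K) * (cpath z z' t).2 a b := by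
    intro t ht a b
    have hzpos : 0 < (cpath z z' t).2 a b := (hmap ht).2.1 a b
    show |(cpath z z' t).2 a b * (Real.log (z'.2 a b) - Real.log (z.2 a b))| ≤ _
    rw [abs_mul, abs_of_pos hzpos, mul_comm]
    exact mul_le_mul_of_nonneg_right (hδU a b) hzpos.le
  -- key derivative bounds
  have keyW : ∀ t ∈ Set.Icc (0:ℝ) 1, ∀ (i : Fin K) (j : Fin n1),
      |(F' (cpath z z' t) (cvel z z' t)).1 i j|
        ≤ B i.castSucc * (F (cpath z z' t)).1 i j := by
    intro t ht i j
    have hmem := hmap ht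
    rw [clm_comp1]
    have t1 : |∑ k, ∑ s, (cvel z z' t).1 k s * (F' (cpath z z' t) (eW k s)).1 i j|
        ≤ ∑ k : Fin K, δ k.castSucc * (A i.castSucc k.castSucc * (F (cpath z z' t)).1 i j) := by
      refine (Finset.abs_sum_le_sum_abs _ _).trans (Finset.sum_le_sum fun k _ => ?_)
      refine (Finset.abs_sum_le_sum_abs _ _).trans ?_
      calc ∑ s, |(cvel z z' t).1 k s * (F' (cpath z z' t) (eW k s)).1 i j|
          ≤ ∑ s, δ k.castSucc * ((cpath z z' t).1 k s * |(F' (cpath z z' t) (eW k s)).1 i j|) := by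
            refine Finset.sum_le_sum fun s _ => ?_
            rw [abs_mul, ← mul_assoc]
            exact mul_le_mul_of_nonneg_right (hvW t ht k s) (abs_nonneg _)
        _ = δ k.castSucc * ∑ s, (cpath z z' t).1 k s * |(F' (cpath z z' t) (eW k s)).1 i j| := by
            rw [Finset.mul_sum]
        _ ≤ δ k.castSucc * (A i.castSucc k.castSucc * (F (cpath z z' t)).1 i j) :=
            mul_le_mul_of_nonneg_left (hb1 _ hmem i k j) (hδnn _)
    have t2 : |∑ a, ∑ b, (cvel z z' t).2 a b * (F' (cpath z z' t) (eU a b)).1 i j|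
        ≤ δ (Fin.last K) * (A i.castSucc (Fin.last K) * (F (cpath z z' t)).1 i j) := by
      refine (Finset.abs_sum_le_sum_abs _ _).trans ?_
      calc ∑ a, |∑ b, (cvel z z' t).2 a b * (F' (cpath z z' t) (eU a b)).1 i j|
          ≤ ∑ a, ∑ b, δ (Fin.last K) *
              ((cpath z z' t).2 a b * |(F' (cpath z z' t) (eU a b)).1 i j|) := by
            refine Finset.sum_le_sum fun a _ =>
              (Finset.abs_sum_le_sum_abs _ _).trans (Finset.sum_le_sum fun b _ => ?_)
            rw [abs_mul, ← mul_assoc]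
            exact mul_le_mul_of_nonneg_right (hvU t ht a b) (abs_nonneg _)
        _ = δ (Fin.last K) *
              ∑ a, ∑ b, (cpath z z' t).2 a b * |(F' (cpath z z' t) (eU a b)).1 i j| := by
            rw [Finset.mul_sum]
            exact Finset.sum_congr rfl fun a _ => by rw [Finset.mul_sum]
        _ ≤ δ (Fin.last K) * (A i.castSucc (Fin.last K) * (F (cpath z z' t)).1 i j) :=
            mul_le_mul_of_nonneg_left (hb2 _ hmem i j) (hδnn _)
    calc |_ + _| ≤ _ + _ := abs_add_le _ _
      _ ≤ (∑ k : Fin K, δ k.castSucc * (A i.castSucc k.castSucc * (F (cpath z z' t)).1 i j))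
            + δ (Fin.last K) * (A i.castSucc (Fin.last K) * (F (cpath z z' t)).1 i j) :=
          add_le_add t1 t2
      _ = B i.castSucc * (F (cpath z z' t)).1 i j := by
          show _ = (∑ k : Fin (K + 1), A i.castSucc k * δ k) * (F (cpath z z' t)).1 i j
          rw [Fin.sum_univ_castSucc (f := fun k => A i.castSucc k * δ k), add_mul,
            Finset.sum_mul]
          congr 1
          · exact Finset.sum_congr rfl fun k _ => by ring
          · ring
  have keyU : ∀ t ∈ Set.Icc (0:ℝ) 1, ∀ (a : Fin n1) (b : Fin d),
      |(F' (cpath z z' t) (cvel z z' t)).2 a b|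
        ≤ B (Fin.last K) * (F (cpath z z' t)).2 a b := by
    intro t ht a b
    have hmem := hmap ht
    rw [clm_comp2]
    have t1 : |∑ k, ∑ s, (cvel z z' t).1 k s * (F' (cpath z z' t) (eW k s)).2 a b|
        ≤ ∑ k : Fin K, δ k.castSucc *
            (A (Fin.last K) k.castSucc * (F (cpath z z' t)).2 a b) := by
      refine (Finset.abs_sum_le_sum_abs _ _).trans (Finset.sum_le_sum fun k _ => ?_)
      refine (Finset.abs_sum_le_sum_abs _ _).trans ?_
      calc ∑ s, |(cvel z z' t).1 k s * (F' (cpath z z' t) (eW k s)).2 a b|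
          ≤ ∑ s, δ k.castSucc * ((cpath z z' t).1 k s * |(F' (cpath z z' t) (eW k s)).2 a b|) := by
            refine Finset.sum_le_sum fun s _ => ?_
            rw [abs_mul, ← mul_assoc]
            exact mul_le_mul_of_nonneg_right (hvW t ht k s) (abs_nonneg _)
        _ = δ k.castSucc * ∑ s, (cpath z z' t).1 k s * |(F' (cpath z z' t) (eW k s)).2 a b| := by
            rw [Finset.mul_sum]
        _ ≤ δ k.castSucc * (A (Fin.last K) k.castSucc * (F (cpath z z' t)).2 a b) :=
            mul_le_mul_of_nonneg_left (hb3 _ hmem k a b) (hδnn _)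
    have t2 : |∑ s, ∑ r, (cvel z z' t).2 s r * (F' (cpath z z' t) (eU s r)).2 a b|
        ≤ δ (Fin.last K) * (A (Fin.last K) (Fin.last K) * (F (cpath z z' t)).2 a b) := by
      refine (Finset.abs_sum_le_sum_abs _ _).trans ?_
      calc ∑ s, |∑ r, (cvel z z' t).2 s r * (F' (cpath z z' t) (eU s r)).2 a b|
          ≤ ∑ s, ∑ r, δ (Fin.last K) *
              ((cpath z z' t).2 s r * |(F' (cpath z z' t) (eU s r)).2 a b|) := by
            refine Finset.sum_le_sum fun s _ =>
              (Finset.abs_sum_le_sum_abs _ _).trans (Finset.sum_le_sum fun r _ => ?_)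
            rw [abs_mul, ← mul_assoc]
            exact mul_le_mul_of_nonneg_right (hvU t ht s r) (abs_nonneg _)
        _ = δ (Fin.last K) *
              ∑ s, ∑ r, (cpath z z' t).2 s r * |(F' (cpath z z' t) (eU s r)).2 a b| := by
            rw [Finset.mul_sum]
            exact Finset.sum_congr rfl fun s _ => by rw [Finset.mul_sum]
        _ ≤ δ (Fin.last K) * (A (Fin.last K) (Fin.last K) * (F (cpath z z' t)).2 a b) :=
            mul_le_mul_of_nonneg_left (hb4 _ hmem a b) (hδnn _)
    calc |_ + _| ≤ _ + _ := abs_add_le _ _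
      _ ≤ (∑ k : Fin K, δ k.castSucc * (A (Fin.last K) k.castSucc * (F (cpath z z' t)).2 a b))
            + δ (Fin.last K) * (A (Fin.last K) (Fin.last K) * (F (cpath z z' t)).2 a b) :=
          add_le_add t1 t2
      _ = B (Fin.last K) * (F (cpath z z' t)).2 a b := by
          show _ = (∑ k : Fin (K + 1), A (Fin.last K) k * δ k) * (F (cpath z z' t)).2 a b
          rw [Fin.sum_univ_castSucc (f := fun k => A (Fin.last K) k * δ k), add_mul,
            Finset.sum_mul]
          congr 1
          · exact Finset.sum_congr rfl fun k _ => by ring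
          · ring
  -- mean value estimates
  have mvtW : ∀ (i : Fin K) (j : Fin n1),
      |Real.log ((F z').1 i j) - Real.log ((F z).1 i j)| ≤ B i.castSucc := by
    intro i j
    have hder : ∀ t ∈ Set.Icc (0:ℝ) 1,
        HasDerivWithinAt (fun t => Real.log ((F (cpath z z' t)).1 i j))
          ((F' (cpath z z' t) (cvel z z' t)).1 i j / (F (cpath z z' t)).1 i j)
          (Set.Icc 0 1) t := by
      intro t ht
      have h1 : HasDerivWithinAt (cpath z z') (cvel z z' t) (Set.Icc 0 1) t :=
        (cpath_hasDerivAt z z' t).hasDerivWithinAt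
      have h2 : HasDerivWithinAt (F ∘ cpath z z')
          (F' (cpath z z' t) (cvel z z' t)) (Set.Icc 0 1) t :=
        HasFDerivWithinAt.comp_hasDerivWithinAt t (hdF _ (hmap ht)) h1 hmap
      let L : PV K n1 d →L[ℝ] ℝ :=
        (ContinuousLinearMap.proj (R := ℝ) (φ := fun _ : Fin n1 => ℝ) j).comp
          ((ContinuousLinearMap.proj (R := ℝ) (φ := fun _ : Fin K => Fin n1 → ℝ) i).comp
            (ContinuousLinearMap.fst ℝ (Fin K → Fin n1 → ℝ) (Fin n1 → Fin d → ℝ)))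
      have h3 := HasFDerivAt.comp_hasDerivWithinAt t (L.hasFDerivAt) h2
      have h4 : HasDerivWithinAt (fun t => (F (cpath z z' t)).1 i j)
          ((F' (cpath z z' t) (cvel z z' t)).1 i j) (Set.Icc 0 1) t := h3
      exact h4.log (ne_of_gt ((hFpos _ (hmap ht)).1 i j))
    have hbound : ∀ t ∈ Set.Icc (0:ℝ) 1,
        ‖(F' (cpath z z' t) (cvel z z' t)).1 i j / (F (cpath z z' t)).1 i j‖
          ≤ B i.castSucc := by
      intro t ht
      have hF := (hFpos _ (hmap ht)).1 i j
      rw [Real.norm_eq_abs, abs_div, abs_of_pos hF, div_le_iff₀ hF]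
      exact keyW t ht i j
    have h := Convex.norm_image_sub_le_of_norm_hasDerivWithin_le hder hbound (convex_Icc 0 1)
      (Set.left_mem_Icc.mpr zero_le_one) (Set.right_mem_Icc.mpr zero_le_one)
    rw [cpath_zero hz.1 hz.2.1, cpath_one hz'.1 hz'.2.1] at h
    simpa [Real.norm_eq_abs] using h
  have mvtU : ∀ (a : Fin n1) (b : Fin d),
      |Real.log ((F z').2 a b) - Real.log ((F z).2 a b)| ≤ B (Fin.last K) := by
    intro a b
    have hder : ∀ t ∈ Set.Icc (0:ℝ) 1,
        HasDerivWithinAt (fun t => Real.log ((F (cpath z z' t)).2 a b))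
          ((F' (cpath z z' t) (cvel z z' t)).2 a b / (F (cpath z z' t)).2 a b)
          (Set.Icc 0 1) t := by
      intro t ht
      have h1 : HasDerivWithinAt (cpath z z') (cvel z z' t) (Set.Icc 0 1) t :=
        (cpath_hasDerivAt z z' t).hasDerivWithinAt
      have h2 : HasDerivWithinAt (F ∘ cpath z z')
          (F' (cpath z z' t) (cvel z z' t)) (Set.Icc 0 1) t :=
        HasFDerivWithinAt.comp_hasDerivWithinAt t (hdF _ (hmap ht)) h1 hmap
      let L : PV K n1 d →L[ℝ] ℝ :=
        (ContinuousLinearMap.proj (R := ℝ) (φ := fun _ : Fin d => ℝ) b).comp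
          ((ContinuousLinearMap.proj (R := ℝ) (φ := fun _ : Fin n1 => Fin d → ℝ) a).comp
            (ContinuousLinearMap.snd ℝ (Fin K → Fin n1 → ℝ) (Fin n1 → Fin d → ℝ)))
      have h3 := HasFDerivAt.comp_hasDerivWithinAt t (L.hasFDerivAt) h2
      have h4 : HasDerivWithinAt (fun t => (F (cpath z z' t)).2 a b)
          ((F' (cpath z z' t) (cvel z z' t)).2 a b) (Set.Icc 0 1) t := h3
      exact h4.log (ne_of_gt ((hFpos _ (hmap ht)).2 a b))
    have hbound : ∀ t ∈ Set.Icc (0:ℝ) 1,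
        ‖(F' (cpath z z' t) (cvel z z' t)).2 a b / (F (cpath z z' t)).2 a b‖
          ≤ B (Fin.last K) := by
      intro t ht
      have hF := (hFpos _ (hmap ht)).2 a b
      rw [Real.norm_eq_abs, abs_div, abs_of_pos hF, div_le_iff₀ hF]
      exact keyU t ht a b
    have h := Convex.norm_image_sub_le_of_norm_hasDerivWithin_le hder hbound (convex_Icc 0 1)
      (Set.left_mem_Icc.mpr zero_le_one) (Set.right_mem_Icc.mpr zero_le_one)
    rw [cpath_zero hz.1 hz.2.1, cpath_one hz'.1 hz'.2.1] at h
    simpa [Real.norm_eq_abs] using h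
  -- assemble
  have hthom1 : thomW γ (F z) (F z') ≤ ∑ i : Fin (K + 1), γ i * B i := by
    rw [thomW, Fin.sum_univ_castSucc]
    refine add_le_add (Finset.sum_le_sum fun i _ => ?_) ?_
    · refine mul_le_mul_of_nonneg_left ?_ (hγ _).le
      rw [pi_norm_le_iff_of_nonneg (hBnn _)]
      intro j
      rw [Real.norm_eq_abs, abs_sub_comm]
      exact mvtW i j
    · refine mul_le_mul_of_nonneg_left ?_ (hγ _).le
      rw [pi_norm_le_iff_of_nonneg (hBnn _)]
      intro a
      rw [pi_norm_le_iff_of_nonneg (hBnn _)]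
      intro b
      rw [Real.norm_eq_abs, abs_sub_comm]
      exact mvtU a b
  have hthom2 : thomW γ z z' = ∑ k : Fin (K + 1), γ k * δ k := by
    rw [thomW, Fin.sum_univ_castSucc]
    congr 1
    · exact Finset.sum_congr rfl fun i _ => by rw [hδc]
    · rw [hδl]
  calc thomW γ (F z) (F z') ≤ ∑ i : Fin (K + 1), γ i * B i := hthom1
    _ = ∑ k : Fin (K + 1), (∑ i, γ i * A i k) * δ k := by
        simp only [hB, Finset.mul_sum]
        rw [Finset.sum_comm]
        exact Finset.sum_congr rfl fun k _ => by
          rw [Finset.sum_mul]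
          exact Finset.sum_congr rfl fun i _ => by ring
    _ ≤ ∑ k : Fin (K + 1), (U * γ k) * δ k := by
        refine Finset.sum_le_sum fun k _ => mul_le_mul_of_nonneg_right ?_ (hδnn k)
        have h1 : A.transpose.mulVec γ k / γ k ≤ U :=
          Finset.le_sup' (f := fun k => A.transpose.mulVec γ k / γ k) (Finset.mem_univ k)
        have h2 : A.transpose.mulVec γ k = ∑ i, γ i * A i k := by
          simp [Matrix.mulVec, Matrix.transpose_apply, dotProduct, mul_comm]
        rw [← h2]
        exact (div_le_iff₀ (hγ k)).mp h1
    _ = U * ∑ k, γ k * δ k := by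
        rw [Finset.mul_sum]
        exact Finset.sum_congr rfl fun k _ => by ring
    _ = U * thomW γ z z' := by rw [hthom2]
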